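/- Every centralizer Φ on ℓ^p is quasilinear with Q(Φ) ≤ M·C(Φ), where M depends only on p (the modulus of concavity of ℓ^p): that is, ‖Φ(x+y) − Φ(x) − Φ(y)‖_p ≤ M·C(Φ)(‖x‖_p + ‖y‖_p) for all finitely supported x, y. -/
import Mathlib


/-- Finitely supported sequences (the subspace `ℓ^p⁰ ⊆ ℓ^p`). -/
def FinSupp (x : ℕ → ℂ) : Prop := (Function.support x).Finite

/-- The `ℓ^p` quasinorm `(Σ |x n|^p)^(1/p)`. -/
noncomputable def pnorm (p : ℝ) (x : ℕ → ℂ) : ℝ := (∑' n, ‖x n‖ ^ p) ^ (1 / p)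

lemma tsum_norm_rpow_nonneg (p : ℝ) (x : ℕ → ℂ) : 0 ≤ ∑' n, ‖x n‖ ^ p :=
  tsum_nonneg fun n => Real.rpow_nonneg (norm_nonneg _) p

lemma pnorm_nonneg (p : ℝ) (x : ℕ → ℂ) : 0 ≤ pnorm p x :=
  Real.rpow_nonneg (tsum_norm_rpow_nonneg p x) _

lemma pnorm_neg (p : ℝ) (x : ℕ → ℂ) : pnorm p (-x) = pnorm p x := by
  simp [pnorm]

lemma summable_neg' {p : ℝ} {g : ℕ → ℂ} (h : Summable fun n => ‖g n‖ ^ p) :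
    Summable fun n => ‖(-g) n‖ ^ p := by
  simpa using h

lemma finsupp_summable {p : ℝ} (hp : 0 < p) {x : ℕ → ℂ} (hx : FinSupp x) :
    Summable fun n => ‖x n‖ ^ p := by
  classical
  apply summable_of_ne_finset_zero (s := hx.toFinset)
  intro n hn
  have hxn : x n = 0 := by
    by_contra h
    exact hn (hx.mem_toFinset.2 h)
  simp [hxn, Real.zero_rpow hp.ne']

lemma norm_add_rpow_le {p : ℝ} (hp : 0 < p) (s t : ℂ) :
    ‖s + t‖ ^ p ≤ 2 ^ p * (‖s‖ ^ p + ‖t‖ ^ p) := by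
  have h1 : ‖s + t‖ ≤ 2 * max ‖s‖ ‖t‖ := by
    calc ‖s + t‖ ≤ ‖s‖ + ‖t‖ := norm_add_le _ _
      _ ≤ 2 * max ‖s‖ ‖t‖ := by
          rw [two_mul]
          exact add_le_add (le_max_left _ _) (le_max_right _ _)
  have hm : 0 ≤ max ‖s‖ ‖t‖ := le_max_of_le_left (norm_nonneg _)
  have h2 : ‖s + t‖ ^ p ≤ (2 * max ‖s‖ ‖t‖) ^ p :=
    Real.rpow_le_rpow (norm_nonneg _) h1 hp.le
  rw [Real.mul_rpow (by norm_num) hm] at h2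
  refine h2.trans ?_
  have h3 : (max ‖s‖ ‖t‖) ^ p ≤ ‖s‖ ^ p + ‖t‖ ^ p := by
    rcases le_total ‖s‖ ‖t‖ with h | h
    · rw [max_eq_right h]
      exact le_add_of_nonneg_left (Real.rpow_nonneg (norm_nonneg _) _)
    · rw [max_eq_left h]
      exact le_add_of_nonneg_right (Real.rpow_nonneg (norm_nonneg _) _)
  have h4 : (0:ℝ) ≤ 2 ^ p := Real.rpow_nonneg (by norm_num) _
  exact mul_le_mul_of_nonneg_left h3 h4

/-- The quasi-triangle inequality for `pnorm`, with constant `2^(1+1/p)`. -/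
lemma quasi {p : ℝ} (hp : 0 < p) (u v : ℕ → ℂ)
    (hu : Summable fun n => ‖u n‖ ^ p) (hv : Summable fun n => ‖v n‖ ^ p) :
    (Summable fun n => ‖(u + v) n‖ ^ p) ∧
      pnorm p (u + v) ≤ 2 ^ (1 + 1/p) * (pnorm p u + pnorm p v) := by
  have hbig : Summable fun n => 2 ^ p * (‖u n‖ ^ p + ‖v n‖ ^ p) := (hu.add hv).mul_left _
  have hle : ∀ n, ‖(u + v) n‖ ^ p ≤ 2 ^ p * (‖u n‖ ^ p + ‖v n‖ ^ p) := fun n =>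
    norm_add_rpow_le hp (u n) (v n)
  have hsum : Summable fun n => ‖(u + v) n‖ ^ p :=
    Summable.of_nonneg_of_le (fun n => Real.rpow_nonneg (norm_nonneg _) _) hle hbig
  refine ⟨hsum, ?_⟩
  have hSu : 0 ≤ ∑' n, ‖u n‖ ^ p := tsum_norm_rpow_nonneg p u
  have hSv : 0 ≤ ∑' n, ‖v n‖ ^ p := tsum_norm_rpow_nonneg p v
  have h1 : (∑' n, ‖(u + v) n‖ ^ p) ≤ 2 ^ p * ((∑' n, ‖u n‖ ^ p) + ∑' n, ‖v n‖ ^ p) := by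
    calc (∑' n, ‖(u + v) n‖ ^ p) ≤ ∑' n, 2 ^ p * (‖u n‖ ^ p + ‖v n‖ ^ p) :=
          Summable.tsum_le_tsum hle hsum hbig
      _ = 2 ^ p * ((∑' n, ‖u n‖ ^ p) + ∑' n, ‖v n‖ ^ p) := by
          rw [tsum_mul_left, Summable.tsum_add hu hv]
  have h2 : pnorm p (u + v) ≤ (2 ^ p * ((∑' n, ‖u n‖ ^ p) + ∑' n, ‖v n‖ ^ p)) ^ (1/p) :=
    Real.rpow_le_rpow (tsum_norm_rpow_nonneg p _) h1 (by positivity)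
  have h3 : (2 ^ p * ((∑' n, ‖u n‖ ^ p) + ∑' n, ‖v n‖ ^ p)) ^ (1/p)
      = 2 * ((∑' n, ‖u n‖ ^ p) + ∑' n, ‖v n‖ ^ p) ^ (1/p) := by
    rw [Real.mul_rpow (Real.rpow_nonneg (by norm_num) _) (by positivity),
      ← Real.rpow_mul (by norm_num : (0:ℝ) ≤ 2), mul_one_div_cancel hp.ne', Real.rpow_one]
  have h4 : ((∑' n, ‖u n‖ ^ p) + ∑' n, ‖v n‖ ^ p) ^ (1/p)
      ≤ 2 ^ (1/p) * ((∑' n, ‖u n‖ ^ p) ^ (1/p) + (∑' n, ‖v n‖ ^ p) ^ (1/p)) := by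
    rcases le_total (∑' n, ‖u n‖ ^ p) (∑' n, ‖v n‖ ^ p) with h | h
    · calc ((∑' n, ‖u n‖ ^ p) + ∑' n, ‖v n‖ ^ p) ^ (1/p)
          ≤ (2 * ∑' n, ‖v n‖ ^ p) ^ (1/p) :=
            Real.rpow_le_rpow (by positivity) (by linarith) (by positivity)
        _ = 2 ^ (1/p) * (∑' n, ‖v n‖ ^ p) ^ (1/p) := Real.mul_rpow (by norm_num) hSv
        _ ≤ 2 ^ (1/p) * ((∑' n, ‖u n‖ ^ p) ^ (1/p) + (∑' n, ‖v n‖ ^ p) ^ (1/p)) := by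
            have := Real.rpow_nonneg hSu (1/p)
            have h20 : (0:ℝ) ≤ 2 ^ (1/p) := Real.rpow_nonneg (by norm_num) _
            nlinarith
    · calc ((∑' n, ‖u n‖ ^ p) + ∑' n, ‖v n‖ ^ p) ^ (1/p)
          ≤ (2 * ∑' n, ‖u n‖ ^ p) ^ (1/p) :=
            Real.rpow_le_rpow (by positivity) (by linarith) (by positivity)
        _ = 2 ^ (1/p) * (∑' n, ‖u n‖ ^ p) ^ (1/p) := Real.mul_rpow (by norm_num) hSu
        _ ≤ 2 ^ (1/p) * ((∑' n, ‖u n‖ ^ p) ^ (1/p) + (∑' n, ‖v n‖ ^ p) ^ (1/p)) := by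
            have := Real.rpow_nonneg hSv (1/p)
            have h20 : (0:ℝ) ≤ 2 ^ (1/p) := Real.rpow_nonneg (by norm_num) _
            nlinarith
  calc pnorm p (u + v) ≤ 2 * ((∑' n, ‖u n‖ ^ p) + ∑' n, ‖v n‖ ^ p) ^ (1/p) := by
        rw [← h3]; exact h2
    _ ≤ 2 * (2 ^ (1/p) * ((∑' n, ‖u n‖ ^ p) ^ (1/p) + (∑' n, ‖v n‖ ^ p) ^ (1/p))) := by
        linarith
    _ = 2 ^ (1 + 1/p) * (pnorm p u + pnorm p v) := by
        rw [Real.rpow_add (by norm_num : (0:ℝ) < 2), Real.rpow_one]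
        unfold pnorm
        ring

lemma summable_sub' {p : ℝ} (hp : 0 < p) (u v : ℕ → ℂ)
    (hu : Summable fun n => ‖u n‖ ^ p) (hv : Summable fun n => ‖v n‖ ^ p) :
    Summable fun n => ‖(u - v) n‖ ^ p := by
  rw [sub_eq_add_neg]
  exact (quasi hp u (-v) hu (summable_neg' hv)).1

lemma summable_mul_bound {p : ℝ} (hp : 0 < p) (a g : ℕ → ℂ) (A : ℝ)
    (ha : ∀ n, ‖a n‖ ≤ A) (hg : Summable fun n => ‖g n‖ ^ p) :
    Summable fun n => ‖(a * g) n‖ ^ p := by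
  refine Summable.of_nonneg_of_le (fun n => Real.rpow_nonneg (norm_nonneg _) _)
    (fun n => ?_) (hg.mul_left (A ^ p))
  have h1 : ‖(a * g) n‖ = ‖a n‖ * ‖g n‖ := by simp [norm_mul]
  rw [h1, Real.mul_rpow (norm_nonneg _) (norm_nonneg _)]
  exact mul_le_mul_of_nonneg_right (Real.rpow_le_rpow (norm_nonneg _) (ha n) hp.le)
    (Real.rpow_nonneg (norm_nonneg _) _)

/-- every centralizer `Φ` on `ℓ^p` (a homogeneous map
`ℓ^p⁰ → ℓ^p` with `‖Φ(ax) − aΦ(x)‖_p ≤ C ‖a‖_∞ ‖x‖_p`) is quasilinear with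
constant at most `M·C`, where `M` depends only on `p`. -/
theorem statement11 (p : ℝ) (hp : 0 < p) :
    ∃ M : ℝ, 0 ≤ M ∧
      ∀ (Φ : (ℕ → ℂ) → (ℕ → ℂ)) (C : ℝ), 0 ≤ C →
        (∀ (c : ℂ) (x : ℕ → ℂ), FinSupp x → Φ (c • x) = c • Φ x) →
        (∀ x : ℕ → ℂ, FinSupp x → Summable fun n => ‖Φ x n‖ ^ p) →
        (∀ (a x : ℕ → ℂ), FinSupp x → (∃ A : ℝ, ∀ n, ‖a n‖ ≤ A) →
          pnorm p (Φ (a * x) - a * Φ x) ≤ C * (⨆ n, ‖a n‖) * pnorm p x) →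
        ∀ x y : ℕ → ℂ, FinSupp x → FinSupp y →
          pnorm p (Φ (x + y) - Φ x - Φ y) ≤ M * C * (pnorm p x + pnorm p y) := by
  classical
  refine ⟨4 * (2 ^ (1 + 1/p)) ^ 3, by positivity, ?_⟩
  intro Φ C hC hhom hsum hcen x y hx hy
  have hK1 : (1:ℝ) ≤ 2 ^ (1 + 1/p) := by
    calc (1:ℝ) = 2 ^ (0:ℝ) := (Real.rpow_zero 2).symm
      _ ≤ 2 ^ (1 + 1/p) := Real.rpow_le_rpow_of_exponent_le one_le_two (by positivity)
  have hK0 : (0:ℝ) ≤ 2 ^ (1 + 1/p) := by positivity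
  -- the dominating sequence w = |x| + |y|
  set w : ℕ → ℂ := fun n => ((‖x n‖ + ‖y n‖ : ℝ) : ℂ) with hwdef
  set a : ℕ → ℂ := fun n => if w n = 0 then 0 else x n / w n with hadef
  set b : ℕ → ℂ := fun n => if w n = 0 then 0 else y n / w n with hbdef
  have hwzero : ∀ n, w n = 0 → x n = 0 ∧ y n = 0 := by
    intro n hn
    rw [hwdef] at hn
    simp only [Complex.ofReal_eq_zero] at hn
    have h1 := norm_nonneg (x n)
    have h2 := norm_nonneg (y n)
    constructor
    · exact norm_eq_zero.1 (by linarith)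
    · exact norm_eq_zero.1 (by linarith)
  have hnw : ∀ n, ‖w n‖ = ‖x n‖ + ‖y n‖ := by
    intro n
    rw [hwdef]
    simp only [Complex.norm_real]
    exact abs_of_nonneg (by positivity)
  have haw : a * w = x := by
    funext n
    by_cases h : w n = 0
    · simp [hadef, h, (hwzero n h).1]
    · simp only [Pi.mul_apply, hadef, h, if_neg h]
      exact div_mul_cancel₀ _ h
  have hbw : b * w = y := by
    funext n
    by_cases h : w n = 0
    · simp [hbdef, h, (hwzero n h).2]
    · simp only [Pi.mul_apply, hbdef, h, if_neg h]
      exact div_mul_cancel₀ _ h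
  have habw : (a + b) * w = x + y := by rw [add_mul, haw, hbw]
  have hna : ∀ n, ‖a n‖ ≤ 1 := by
    intro n
    by_cases h : w n = 0
    · simp [hadef, h]
    · simp only [hadef, if_neg h, norm_div]
      rw [div_le_one (norm_pos_iff.2 h), hnw n]
      have := norm_nonneg (y n)
      linarith
  have hnb : ∀ n, ‖b n‖ ≤ 1 := by
    intro n
    by_cases h : w n = 0
    · simp [hbdef, h]
    · simp only [hbdef, if_neg h, norm_div]
      rw [div_le_one (norm_pos_iff.2 h), hnw n]
      have := norm_nonneg (x n)
      linarith
  have hnab : ∀ n, ‖(a + b) n‖ ≤ 2 := by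
    intro n
    calc ‖(a + b) n‖ ≤ ‖a n‖ + ‖b n‖ := norm_add_le _ _
      _ ≤ 2 := by have := hna n; have := hnb n; linarith
  have hfw : FinSupp w := by
    apply (hx.union hy).subset
    intro n hn
    by_contra h
    simp only [Set.mem_union, Function.mem_support, not_or, not_not] at h
    apply hn
    simp [hwdef, h.1, h.2]
  have hfxy : FinSupp (x + y) := by
    apply (hx.union hy).subset
    intro n hn
    by_contra h
    simp only [Set.mem_union, Function.mem_support, not_or, not_not] at h
    apply hn
    simp [h.1, h.2]
  -- summability facts
  have hΦw := hsum w hfw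
  have hΦx := hsum x hx
  have hΦy := hsum y hy
  have hΦxy := hsum (x + y) hfxy
  have haΦw := summable_mul_bound hp a (Φ w) 1 hna hΦw
  have hbΦw := summable_mul_bound hp b (Φ w) 1 hnb hΦw
  have habΦw := summable_mul_bound hp (a + b) (Φ w) 2 hnab hΦw
  have hsU := summable_sub' hp _ _ hΦxy habΦw
  have hsV := summable_sub' hp _ _ hΦx haΦw
  have hsW := summable_sub' hp _ _ hΦy hbΦw
  -- centralizer bounds
  have hpw0 : 0 ≤ pnorm p w := pnorm_nonneg p w
  have hU : pnorm p (Φ (x + y) - (a + b) * Φ w) ≤ C * 2 * pnorm p w := by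
    have h := hcen (a + b) w hfw ⟨2, hnab⟩
    rw [habw] at h
    refine h.trans ?_
    exact mul_le_mul_of_nonneg_right
      (mul_le_mul_of_nonneg_left (ciSup_le hnab) hC) hpw0
  have hV : pnorm p (Φ x - a * Φ w) ≤ C * 1 * pnorm p w := by
    have h := hcen a w hfw ⟨1, hna⟩
    rw [haw] at h
    refine h.trans ?_
    exact mul_le_mul_of_nonneg_right
      (mul_le_mul_of_nonneg_left (ciSup_le hna) hC) hpw0
  have hW : pnorm p (Φ y - b * Φ w) ≤ C * 1 * pnorm p w := by
    have h := hcen b w hfw ⟨1, hnb⟩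
    rw [hbw] at h
    refine h.trans ?_
    exact mul_le_mul_of_nonneg_right
      (mul_le_mul_of_nonneg_left (ciSup_le hnb) hC) hpw0
  -- quasi-triangle assembly
  obtain ⟨hsE, hE⟩ := quasi hp (-(Φ x - a * Φ w)) (-(Φ y - b * Φ w))
    (summable_neg' hsV) (summable_neg' hsW)
  rw [pnorm_neg, pnorm_neg] at hE
  obtain ⟨_, hfinal⟩ := quasi hp (Φ (x + y) - (a + b) * Φ w)
    (-(Φ x - a * Φ w) + -(Φ y - b * Φ w)) hsU hsE
  have hDeq : Φ (x + y) - Φ x - Φ y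
      = (Φ (x + y) - (a + b) * Φ w) + (-(Φ x - a * Φ w) + -(Φ y - b * Φ w)) := by
    ring
  -- bound on pnorm w
  have hwle : pnorm p w ≤ 2 ^ (1 + 1/p) * (pnorm p x + pnorm p y) := by
    set x' : ℕ → ℂ := fun n => ((‖x n‖ : ℝ) : ℂ) with hx'def
    set y' : ℕ → ℂ := fun n => ((‖y n‖ : ℝ) : ℂ) with hy'def
    have hnx' : ∀ n, ‖x' n‖ = ‖x n‖ := fun n => by
      simp [hx'def]
    have hny' : ∀ n, ‖y' n‖ = ‖y n‖ := fun n => by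
      simp [hy'def]
    have hsx' : Summable fun n => ‖x' n‖ ^ p := by
      have := finsupp_summable hp hx
      refine this.congr fun n => ?_
      rw [hnx']
    have hsy' : Summable fun n => ‖y' n‖ ^ p := by
      have := finsupp_summable hp hy
      refine this.congr fun n => ?_
      rw [hny']
    have hwxy : w = x' + y' := by
      funext n
      simp [hwdef, hx'def, hy'def]
    have hpx' : pnorm p x' = pnorm p x := by
      unfold pnorm
      congr 1
      exact tsum_congr fun n => by rw [hnx']
    have hpy' : pnorm p y' = pnorm p y := by
      unfold pnorm
      congr 1
      exact tsum_congr fun n => by rw [hny']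
    have h := (quasi hp x' y' hsx' hsy').2
    rw [hpx', hpy'] at h
    rw [hwxy]
    exact h
  -- final arithmetic
  have hE2 : pnorm p (-(Φ x - a * Φ w) + -(Φ y - b * Φ w))
      ≤ 2 ^ (1 + 1/p) * (C * 1 * pnorm p w + C * 1 * pnorm p w) := by
    refine hE.trans ?_
    exact mul_le_mul_of_nonneg_left (add_le_add hV hW) hK0
  calc pnorm p (Φ (x + y) - Φ x - Φ y)
      = pnorm p ((Φ (x + y) - (a + b) * Φ w) + (-(Φ x - a * Φ w) + -(Φ y - b * Φ w))) := by
        rw [hDeq]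
    _ ≤ 2 ^ (1 + 1/p) * (pnorm p (Φ (x + y) - (a + b) * Φ w)
        + pnorm p (-(Φ x - a * Φ w) + -(Φ y - b * Φ w))) := hfinal
    _ ≤ 2 ^ (1 + 1/p) * ((C * 2 * pnorm p w)
        + 2 ^ (1 + 1/p) * (C * 1 * pnorm p w + C * 1 * pnorm p w)) := by
        exact mul_le_mul_of_nonneg_left (add_le_add hU hE2) hK0
    _ ≤ 4 * (2 ^ (1 + 1/p)) ^ 3 * C * (pnorm p x + pnorm p y) := by
        have hKK : (2:ℝ) ^ (1 + 1/p) ≤ 2 ^ (1 + 1/p) * 2 ^ (1 + 1/p) :=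
          le_mul_of_one_le_left hK0 hK1
        have h2Cpw : (0:ℝ) ≤ 2 * C * pnorm p w :=
          mul_nonneg (mul_nonneg (by norm_num) hC) hpw0
        have c2 : (2 * C * pnorm p w) * (2 ^ (1 + 1/p))
            ≤ (2 * C * pnorm p w) * (2 ^ (1 + 1/p) * 2 ^ (1 + 1/p)) :=
          mul_le_mul_of_nonneg_left hKK h2Cpw
        have c3nn : (0:ℝ) ≤ 4 * (2 ^ (1 + 1/p) * 2 ^ (1 + 1/p)) * C :=
          mul_nonneg (mul_nonneg (by norm_num) (mul_nonneg hK0 hK0)) hC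
        have c3 : (4 * (2 ^ (1 + 1/p) * 2 ^ (1 + 1/p)) * C) * pnorm p w
            ≤ (4 * (2 ^ (1 + 1/p) * 2 ^ (1 + 1/p)) * C)
              * (2 ^ (1 + 1/p) * (pnorm p x + pnorm p y)) :=
          mul_le_mul_of_nonneg_left hwle c3nn
        nlinarith [c2, c3]
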